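/- (Davis–Sherman inequality with f(0)=0) Let f be an operator convex function on an interval containing 0 with f(0)=0, P an orthogonal projection, and A a self-adjoint operator. Then f(PAP) ≤ P f(A) P as quadratic forms. -/

import Mathlib

section DavisShermanAux


open Polynomial in
lemma aeval_mul_idem {A : Type*} [Ring A] [Algebra ℝ A] (a p : A)
    (hp : IsIdempotentElem p) (hc : Commute a p) (q : ℝ[X]) :
    aeval (a * p) q = aeval a q * p + q.coeff 0 • (1 - p) := by
  induction q using Polynomial.induction_on with
  | C r =>
      simp [Algebra.algebraMap_eq_smul_one, smul_sub, smul_mul_assoc]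
  | add q₁ q₂ h1 h2 =>
      simp only [map_add, h1, h2, coeff_add, add_smul, add_mul]
      abel
  | monomial n r _ =>
      simp only [map_mul, map_pow, aeval_C, aeval_X, coeff_C_mul, coeff_X_pow]
      rw [hc.mul_pow, hp.pow_succ_eq]
      simp [Algebra.algebraMap_eq_smul_one, smul_mul_assoc, mul_assoc,
        (hc.pow_left (n+1)).eq]

variable {H : Type*} [NormedAddCommGroup H] [InnerProductSpace ℂ H] [CompleteSpace H]

lemma cfc_mul_idem [Nontrivial H] (f : ℝ → ℝ) (hf : Continuous f) (hf0 : f 0 = 0)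
    (a p : H →L[ℂ] H) (ha : IsSelfAdjoint a) (hp : IsIdempotentElem p)
    (hpsa : IsSelfAdjoint p) (hc : Commute a p) :
    cfc f (a * p) = cfc f a * p := by
  have hap : IsSelfAdjoint (a * p) := by
    rw [IsSelfAdjoint, star_mul, hpsa.star_eq, ha.star_eq, hc.eq]
  set M : ℝ := max ‖a‖ ‖a * p‖ with hM
  have hM0 : (0:ℝ) ≤ M := le_trans (norm_nonneg a) (le_max_left _ _)
  have key : ∀ (b : H →L[ℂ] H), IsSelfAdjoint b → ‖b‖ ≤ M →
      spectrum ℝ b ⊆ Set.Icc (-M) M := by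
    intro b _ hb x hx
    have h1 : |x| ≤ ‖b‖ := by
      simpa [Real.norm_eq_abs] using spectrum.norm_le_norm_of_mem hx
    have := abs_le.mp (h1.trans hb)
    exact ⟨this.1, this.2⟩
  have hspa : spectrum ℝ a ⊆ Set.Icc (-M) M := key a ha (le_max_left _ _)
  have hspap : spectrum ℝ (a * p) ⊆ Set.Icc (-M) M := key _ hap (le_max_right _ _)
  -- approximate
  have main : ∀ ε : ℝ, 0 < ε →
      ‖cfc f (a * p) - cfc f a * p‖ ≤ ε * (2 + 2 * ‖p‖) := by
    intro ε hε
    obtain ⟨q₀, hq₀⟩ := exists_polynomial_near_of_continuousOn (-M) M f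
      hf.continuousOn ε hε
    set q : Polynomial ℝ := q₀ - Polynomial.C (q₀.eval 0) with hqdef
    have h00 : (0:ℝ) ∈ Set.Icc (-M) M := by constructor <;> linarith
    have hq0 : |q₀.eval 0| ≤ ε := by
      have := hq₀ 0 h00
      rw [hf0, sub_zero] at this
      exact this.le
    have hqapprox : ∀ x ∈ Set.Icc (-M) M, |q.eval x - f x| ≤ 2 * ε := by
      intro x hx
      have h1 := (hq₀ x hx).le
      simp only [hqdef, Polynomial.eval_sub, Polynomial.eval_C]
      calc |q₀.eval x - q₀.eval 0 - f x| ≤ |q₀.eval x - f x| + |q₀.eval 0| := by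
            rw [sub_right_comm]; exact abs_sub _ _
        _ ≤ 2 * ε := by linarith
    have hqc0 : q.coeff 0 = 0 := by
      simp [hqdef, Polynomial.coeff_sub, Polynomial.coeff_zero_eq_eval_zero]
    have heval : Polynomial.aeval (a * p) q = Polynomial.aeval a q * p := by
      rw [aeval_mul_idem a p hp hc q, hqc0, zero_smul, add_zero]
    have h1 : ‖cfc f (a * p) - Polynomial.aeval (a * p) q‖ ≤ 2 * ε := by
      rw [← cfc_polynomial q (a * p), ← cfc_sub f q.eval (a * p)]
      refine norm_cfc_le (by linarith) fun x hx => ?_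
      have := hqapprox x (hspap hx)
      rw [Real.norm_eq_abs, abs_sub_comm]
      linarith
    have h2 : ‖cfc f a - Polynomial.aeval a q‖ ≤ 2 * ε := by
      rw [← cfc_polynomial q a, ← cfc_sub f q.eval a]
      refine norm_cfc_le (by linarith) fun x hx => ?_
      have := hqapprox x (hspa hx)
      rw [Real.norm_eq_abs, abs_sub_comm]
      linarith
    calc ‖cfc f (a * p) - cfc f a * p‖
        = ‖(cfc f (a * p) - Polynomial.aeval (a * p) q)
            + (Polynomial.aeval a q - cfc f a) * p‖ := by
          rw [heval]; congr 1; noncomm_ring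
      _ ≤ ‖cfc f (a * p) - Polynomial.aeval (a * p) q‖
            + ‖(Polynomial.aeval a q - cfc f a)‖ * ‖p‖ :=
          (norm_add_le _ _).trans (by gcongr; exact norm_mul_le _ _)
      _ ≤ 2 * ε + 2 * ε * ‖p‖ := by
          have := h2
          rw [norm_sub_rev] at this
          gcongr
      _ = ε * (2 + 2 * ‖p‖) := by ring
  -- conclude
  have : ‖cfc f (a * p) - cfc f a * p‖ ≤ 0 := by
    by_contra hcon
    push_neg at hcon
    set c := ‖cfc f (a * p) - cfc f a * p‖
    have hc2 : 0 < (2 + 2 * ‖p‖) := by positivity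
    have := main (c / (2 * (2 + 2 * ‖p‖))) (by positivity)
    rw [div_mul_eq_mul_div, mul_comm] at this
    have h3 : (2 + 2*‖p‖) * c / (2*(2 + 2*‖p‖)) = c / 2 := by
      field_simp
    rw [h3] at this
    linarith
  rw [← sub_eq_zero]
  exact norm_le_zero_iff.mp this

lemma cfc_conj_unit (f : ℝ → ℝ) (hf : Continuous f) (u a : H →L[ℂ] H)
    (hu : u * u = 1) (husa : IsSelfAdjoint u) (ha : IsSelfAdjoint a) :
    cfc f (u * a * u) = u * cfc f a * u := by
  have huau : IsSelfAdjoint (u * a * u) := by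
    rw [IsSelfAdjoint, star_mul, star_mul, husa.star_eq, ha.star_eq, mul_assoc]
  let φ : (H →L[ℂ] H) →⋆ₐ[ℂ] (H →L[ℂ] H) :=
    { toFun := fun x => u * x * u
      map_one' := by show u * 1 * u = 1; rw [mul_one, hu]
      map_mul' := fun x y => by
        calc u * (x * y) * u = (u * x) * (u * u) * (y * u) := by rw [hu]; noncomm_ring
          _ = u * x * u * (u * y * u) := by noncomm_ring
      map_zero' := by simp
      map_add' := fun x y => by noncomm_ring
      commutes' := fun r => by
        simp only [Algebra.algebraMap_eq_smul_one]
        rw [mul_smul_comm, mul_one, smul_mul_assoc, hu]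
      map_star' := fun x => by
        show u * star x * u = star (u * x * u)
        rw [star_mul, star_mul, husa.star_eq, mul_assoc] }
  have hφc : Continuous φ := by
    show Continuous fun x : H →L[ℂ] H => u * x * u
    fun_prop
  exact (StarAlgHomClass.map_cfc (S := ℂ) φ f a hf.continuousOn hφc ha huau).symm

set_option maxHeartbeats 1000000 in
set_option synthInstance.maxHeartbeats 200000 in
theorem davis_sherman'
    (f : ℝ → ℝ) (hf0 : f 0 = 0)
    (hconv : ∀ (X Y : H →L[ℂ] H), IsSelfAdjoint X → IsSelfAdjoint Y →
      ∀ t : ℝ, 0 ≤ t → t ≤ 1 →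
        cfc f (t • X + (1 - t) • Y) ≤ t • cfc f X + (1 - t) • cfc f Y)
    (P A : H →L[ℂ] H) (hP : IsIdempotentElem P) (hPsa : IsSelfAdjoint P)
    (hA : IsSelfAdjoint A) :
    cfc f (P * A * P) ≤ P * cfc f A * P := by
  obtain hH | hH := subsingleton_or_nontrivial H
  · exact le_of_eq (Subsingleton.elim _ _)
  have hnt : Nontrivial (H →L[ℂ] H) := by
    obtain ⟨v, hv⟩ := exists_ne (0 : H)
    exact ⟨1, 0, fun h => hv (by simpa using DFunLike.congr_fun h v)⟩
  -- f is convex, hence continuous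
  have hsc : ∀ {r t : ℝ}, algebraMap ℝ (H →L[ℂ] H) r ≤ algebraMap ℝ (H →L[ℂ] H) t → r ≤ t := by
    intro r t h
    have h2 : (0 : H →L[ℂ] H) ≤ algebraMap ℝ _ (t - r) := by
      rw [map_sub]; exact sub_nonneg.2 h
    have hmem : t - r ∈ spectrum ℝ (algebraMap ℝ (H →L[ℂ] H) (t - r)) := by
      rw [spectrum.scalar_eq]; exact Set.mem_singleton _
    have := spectrum_nonneg_of_nonneg h2 hmem
    linarith
  have hcvx : ConvexOn ℝ Set.univ f := by
    refine ⟨convex_univ, fun x _ y _ s t hs ht hst => ?_⟩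
    have hXsa : IsSelfAdjoint (algebraMap ℝ (H →L[ℂ] H) x) := IsSelfAdjoint.algebraMap _ (IsSelfAdjoint.all x)
    have hYsa : IsSelfAdjoint (algebraMap ℝ (H →L[ℂ] H) y) := IsSelfAdjoint.algebraMap _ (IsSelfAdjoint.all y)
    have h := hconv _ _ hXsa hYsa s hs (by linarith)
    have hts : (1 : ℝ) - s = t := by linarith
    rw [hts] at h
    have e1 : s • (algebraMap ℝ (H →L[ℂ] H) x) + t • (algebraMap ℝ (H →L[ℂ] H) y)
        = algebraMap ℝ (H →L[ℂ] H) (s * x + t * y) := by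
      simp [Algebra.algebraMap_eq_smul_one, smul_smul, add_smul]
    have e2 : s • (algebraMap ℝ (H →L[ℂ] H) (f x)) + t • (algebraMap ℝ (H →L[ℂ] H) (f y))
        = algebraMap ℝ (H →L[ℂ] H) (s * f x + t * f y) := by
      simp [Algebra.algebraMap_eq_smul_one, smul_smul, add_smul]
    rw [e1] at h
    simp only [cfc_algebraMap] at h
    rw [e2] at h
    simpa [smul_eq_mul] using hsc h
  have hfc : Continuous f := by
    rw [← continuousOn_univ]
    exact hcvx.continuousOn isOpen_univ
  -- the symmetry u = 2P - 1
  set u : H →L[ℂ] H := P + P - 1 with hu_def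
  have husa : IsSelfAdjoint u := by
    rw [IsSelfAdjoint, star_sub, star_add, hPsa.star_eq, star_one]
  have huu : u * u = 1 := by
    simp only [hu_def, mul_sub, sub_mul, mul_add, add_mul, mul_one, one_mul, hP.eq]
    abel
  have hPu : P * u = P := by
    simp only [hu_def, mul_sub, mul_add, mul_one, hP.eq]
    abel
  have huP : u * P = P := by
    simp only [hu_def, sub_mul, add_mul, one_mul, hP.eq]
    abel
  set Y : H →L[ℂ] H := u * A * u with hY_def
  have hYsa : IsSelfAdjoint Y := by
    rw [hY_def, IsSelfAdjoint, star_mul, star_mul, husa.star_eq, hA.star_eq, mul_assoc]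
  set D : H →L[ℂ] H := (2:ℝ)⁻¹ • A + (2:ℝ)⁻¹ • Y with hD_def
  have hDsa : IsSelfAdjoint D :=
    ((IsSelfAdjoint.all ((2:ℝ)⁻¹)).smul hA).add ((IsSelfAdjoint.all ((2:ℝ)⁻¹)).smul hYsa)
  have hDP : D * P = P * A * P := by
    have h1 : Y * P = u * (A * P) := by
      rw [hY_def, mul_assoc, huP, mul_assoc]
    have h2 : A * P + u * (A * P) = P * A * P + P * A * P := by
      rw [hu_def]
      noncomm_ring
    rw [hD_def, add_mul, smul_mul_assoc, smul_mul_assoc, h1, ← smul_add, h2, smul_add,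
      ← add_smul]
    norm_num
  have hPD : P * D = P * A * P := by
    have h1 : P * Y = (P * A) * u := by
      rw [hY_def, ← mul_assoc, ← mul_assoc, hPu]
    have h2 : P * A + (P * A) * u = P * A * P + P * A * P := by
      rw [hu_def]
      noncomm_ring
    rw [hD_def, mul_add, mul_smul_comm, mul_smul_comm, h1, ← smul_add, h2, smul_add,
      ← add_smul]
    norm_num
  have hcomm : Commute D P := by
    show D * P = P * D
    rw [hDP, hPD]
  -- key identity
  have hfD : IsSelfAdjoint (cfc f D) := cfc_predicate f D
  have key : cfc f (P * A * P) = cfc f D * P := by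
    rw [← hDP]
    exact cfc_mul_idem f hfc hf0 D P hDsa hP hPsa hcomm
  have hsa2 : IsSelfAdjoint (cfc f D * P) := by
    rw [← cfc_mul_idem f hfc hf0 D P hDsa hP hPsa hcomm]
    exact cfc_predicate f (D * P)
  have hcomm2 : P * cfc f D = cfc f D * P := by
    calc P * cfc f D = star (cfc f D * P) := by rw [star_mul, hPsa.star_eq, hfD.star_eq]
      _ = cfc f D * P := hsa2.star_eq
  have key2 : P * cfc f D * P = cfc f D * P := by
    rw [hcomm2, mul_assoc, hP.eq]
  -- the convexity inequality
  have h := hconv A Y hA hYsa 2⁻¹ (by norm_num) (by norm_num)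
  have h12 : (1 : ℝ) - 2⁻¹ = 2⁻¹ := by norm_num
  rw [h12] at h
  rw [← hD_def] at h
  have conj := star_left_conjugate_le_conjugate h P
  rw [hPsa.star_eq] at conj
  have hcfcY : cfc f Y = u * cfc f A * u := by
    rw [hY_def]
    exact cfc_conj_unit f hfc u A huu husa hA
  have e3 : P * (u * cfc f A * u) * P = P * cfc f A * P := by
    calc P * (u * cfc f A * u) * P = (P * u) * cfc f A * (u * P) := by noncomm_ring
      _ = P * cfc f A * P := by rw [hPu, huP]
  have e4 : P * ((2:ℝ)⁻¹ • cfc f A + (2:ℝ)⁻¹ • cfc f Y) * P = P * cfc f A * P := by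
    rw [hcfcY, mul_add, add_mul, mul_smul_comm, mul_smul_comm, smul_mul_assoc, smul_mul_assoc,
      e3, ← add_smul]
    norm_num
  calc cfc f (P * A * P) = cfc f D * P := key
    _ = P * cfc f D * P := key2.symm
    _ ≤ P * ((2:ℝ)⁻¹ • cfc f A + (2:ℝ)⁻¹ • cfc f Y) * P := conj
    _ = P * cfc f A * P := e4

end DavisShermanAux

/-- **Davis–Sherman inequality.** If `f` is operator convex with `f 0 = 0`, `P` is an
orthogonal projection and `A` is a (bounded) self-adjoint operator on a complex Hilbert
space, then `f(PAP) ≤ P f(A) P`. Operator convexity is expressed via the continuous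
functional calculus. -/
theorem davis_sherman
    {H : Type*} [NormedAddCommGroup H] [InnerProductSpace ℂ H] [CompleteSpace H]
    (f : ℝ → ℝ) (hf0 : f 0 = 0)
    (hconv : ∀ (X Y : H →L[ℂ] H), IsSelfAdjoint X → IsSelfAdjoint Y →
      ∀ t : ℝ, 0 ≤ t → t ≤ 1 →
        cfc f (t • X + (1 - t) • Y) ≤ t • cfc f X + (1 - t) • cfc f Y)
    (P A : H →L[ℂ] H) (hP : IsIdempotentElem P) (hPsa : IsSelfAdjoint P)
    (hA : IsSelfAdjoint A) :
    cfc f (P * A * P) ≤ P * cfc f A * P := by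
  exact davis_sherman' f hf0 hconv P A hP hPsa hA
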